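/- If for each k with 1 ≤ k ≤ n the random variable r_k takes value j with probability q_{k,j-1} − q_{k,j}, where q_{kj} = C(k-1,j)/C(n,j), and the r_k are independent, then the expected value of the product (z+r_1)(z+r_2)···(z+r_n) equals ∏_{k=1}^n (z + (n+1)/(n+2-k)), which equals (1/(n+1)!)·∏_{k=2}^{n+1} (kz + n + 1). -/

import Mathlib

/-- `q n k j = C(k-1,j)/C(n,j)`, the probability that rank `r_k` exceeds `j`
in uniform hashing on a table of size `n`. -/
def hashTail (n k j : ℕ) : ℚ := (Nat.choose (k - 1) j : ℚ) / (Nat.choose n j : ℚ)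

lemma cast_choose_succ_right (m j : ℕ) :
    ((Nat.choose m (j + 1)) : ℚ) * ((j : ℚ) + 1) = (Nat.choose m j : ℚ) * ((m : ℚ) - j) := by
  rcases le_or_gt j m with h | h
  · have h0 := congrArg (Nat.cast : ℕ → ℚ) (Nat.choose_succ_right_eq m j)
    push_cast [Nat.cast_sub h] at h0
    linarith [h0]
  · rw [Nat.choose_eq_zero_of_lt h, Nat.choose_eq_zero_of_lt (h.trans j.lt_succ_self)]
    simp

lemma telescope_step (n m j : ℕ) (hj : j < n) :
    (Nat.choose m j : ℚ) / (Nat.choose n j) * (((n : ℚ) + 1 - m) / ((n : ℚ) + 1)) =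
      (Nat.choose m j : ℚ) / (Nat.choose (n + 1) j) -
        (Nat.choose m (j + 1) : ℚ) / (Nat.choose (n + 1) (j + 1)) := by
  have hjn : j ≤ n := hj.le
  have hc : (Nat.choose n j : ℚ) ≠ 0 := by
    exact_mod_cast (Nat.choose_pos hjn).ne'
  have hj1 : ((j : ℚ) + 1) ≠ 0 := by positivity
  have hnj : ((n : ℚ) + 1 - j) ≠ 0 := by
    have : (j : ℚ) < n := by exact_mod_cast hj
    linarith
  have hn1 : ((n : ℚ) + 1) ≠ 0 := by positivity
  -- relations
  have h2 : ((Nat.choose (n + 1) j) : ℚ) * ((n : ℚ) + 1 - j) =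
      (Nat.choose n j : ℚ) * ((n : ℚ) + 1) := by
    have h0 := congrArg (Nat.cast : ℕ → ℚ) (Nat.choose_mul_succ_eq n j)
    push_cast [Nat.cast_sub (hjn.trans (Nat.le_succ n))] at h0
    linarith [h0]
  have h3 : ((Nat.choose (n + 1) (j + 1)) : ℚ) * ((j : ℚ) + 1) =
      (Nat.choose (n + 1) j : ℚ) * ((n : ℚ) + 1 - j) := by
    have h0 := congrArg (Nat.cast : ℕ → ℚ) (Nat.choose_succ_right_eq (n + 1) j)
    push_cast [Nat.cast_sub (hjn.trans (Nat.le_succ n))] at h0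
    linarith [h0]
  have h1 := cast_choose_succ_right m j
  have hd : ((Nat.choose (n + 1) j) : ℚ) =
      (Nat.choose n j : ℚ) * ((n : ℚ) + 1) / ((n : ℚ) + 1 - j) := by
    field_simp
    linarith [h2]
  have he : ((Nat.choose (n + 1) (j + 1)) : ℚ) =
      (Nat.choose n j : ℚ) * ((n : ℚ) + 1) / ((j : ℚ) + 1) := by
    rw [eq_div_iff hj1]
    calc ((Nat.choose (n + 1) (j + 1)) : ℚ) * ((j : ℚ) + 1)
        = (Nat.choose (n + 1) j : ℚ) * ((n : ℚ) + 1 - j) := h3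
      _ = (Nat.choose n j : ℚ) * ((n : ℚ) + 1) := h2
  have hb : ((Nat.choose m (j + 1)) : ℚ) =
      (Nat.choose m j : ℚ) * ((m : ℚ) - j) / ((j : ℚ) + 1) := by
    rw [eq_div_iff hj1]; exact h1
  rw [hb, hd, he]
  field_simp
  ring

lemma key_sum (n m : ℕ) (hm : m < n) :
    ∑ j ∈ Finset.range n, (Nat.choose m j : ℚ) / (Nat.choose n j) =
      ((n : ℚ) + 1) / ((n : ℚ) + 1 - m) := by
  have hnm : ((n : ℚ) + 1 - m) ≠ 0 := by
    have : (m : ℚ) < n := by exact_mod_cast hm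
    linarith
  have hn1 : ((n : ℚ) + 1) ≠ 0 := by positivity
  have ht := Finset.sum_range_sub'
    (f := fun j => (Nat.choose m j : ℚ) / (Nat.choose (n + 1) j)) n
  have hend : (Nat.choose m n : ℚ) = 0 := by
    rw [Nat.choose_eq_zero_of_lt hm]; simp
  have hsum : (∑ j ∈ Finset.range n, (Nat.choose m j : ℚ) / (Nat.choose n j)) *
      (((n : ℚ) + 1 - m) / ((n : ℚ) + 1)) = 1 := by
    rw [Finset.sum_mul]
    rw [Finset.sum_congr rfl (fun j hj => telescope_step n m j (Finset.mem_range.mp hj))]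
    rw [ht]
    simp [hend]
  have hne : (((n : ℚ) + 1 - m) / ((n : ℚ) + 1)) ≠ 0 := div_ne_zero hnm hn1
  field_simp at hsum ⊢
  linarith [hsum]

lemma hashInnerSum (n k : ℕ) (hk1 : 1 ≤ k) (hkn : k ≤ n) (z : ℚ) :
    ∑ j ∈ Finset.Icc 1 n, (hashTail n k (j - 1) - hashTail n k j) * (z + (j : ℚ)) =
      z + ((n : ℚ) + 1) / ((n : ℚ) + 2 - (k : ℚ)) := by
  have hm : k - 1 < n := lt_of_lt_of_le (Nat.sub_lt hk1 one_pos) hkn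
  have hcast : ((k - 1 : ℕ) : ℚ) = (k : ℚ) - 1 := by
    push_cast [Nat.cast_sub hk1]; ring
  have hqn : hashTail n k n = 0 := by
    unfold hashTail
    rw [Nat.choose_eq_zero_of_lt hm]; simp
  have hq0 : hashTail n k 0 = 1 := by unfold hashTail; simp
  have step1 : ∑ j ∈ Finset.Icc 1 n, (hashTail n k (j - 1) - hashTail n k j) * (z + (j : ℚ)) =
      ∑ i ∈ Finset.range n, (hashTail n k i - hashTail n k (i + 1)) * (z + 1 + (i : ℚ)) := by
    rw [show Finset.Icc 1 n = Finset.Ico 1 (n + 1) by rw [Finset.Ico_add_one_right_eq_Icc],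
      Finset.sum_Ico_eq_sum_range]
    simp only [Nat.add_sub_cancel]
    apply Finset.sum_congr rfl
    intro i _
    have : (1 + i) - 1 = i := by omega
    rw [this]
    push_cast
    ring
  rw [step1]
  have step2 : ∀ i ∈ Finset.range n,
      (hashTail n k i - hashTail n k (i + 1)) * (z + 1 + (i : ℚ)) =
        (hashTail n k i * (z + 1 + (i : ℚ)) -
          hashTail n k (i + 1) * (z + 1 + ((i : ℚ) + 1))) + hashTail n k (i + 1) := by
    intro i _
    ring
  rw [Finset.sum_congr rfl step2, Finset.sum_add_distrib]
  have htel := Finset.sum_range_sub' (f := fun i => hashTail n k i * (z + 1 + (i : ℚ))) n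
  simp only [Nat.cast_add, Nat.cast_one] at htel ⊢
  rw [htel]
  have hshift : ∑ i ∈ Finset.range n, hashTail n k (i + 1) =
      (∑ j ∈ Finset.range n, hashTail n k j) + hashTail n k n - hashTail n k 0 := by
    have h := Finset.sum_range_succ' (fun j => hashTail n k j) n
    have h2 := Finset.sum_range_succ (fun j => hashTail n k j) n
    rw [h2] at h
    linarith [h]
  rw [hshift]
  have hkey : ∑ j ∈ Finset.range n, hashTail n k j =
      ((n : ℚ) + 1) / ((n : ℚ) + 2 - (k : ℚ)) := by
    unfold hashTail
    rw [key_sum n (k - 1) hm, hcast]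
    ring_nf
  rw [hkey, hqn, hq0]
  push_cast
  ring

theorem expected_product_of_ranks (n : ℕ) (hn : 1 ≤ n) (z : ℚ) :
    (∏ k ∈ Finset.Icc 1 n,
        ∑ j ∈ Finset.Icc 1 n, (hashTail n k (j - 1) - hashTail n k j) * (z + (j : ℚ))) =
      (∏ k ∈ Finset.Icc 1 n, (z + ((n : ℚ) + 1) / ((n : ℚ) + 2 - (k : ℚ)))) ∧
    (∏ k ∈ Finset.Icc 1 n, (z + ((n : ℚ) + 1) / ((n : ℚ) + 2 - (k : ℚ)))) =
      (1 / (Nat.factorial (n + 1) : ℚ)) *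
        ∏ k ∈ Finset.Icc 2 (n + 1), ((k : ℚ) * z + (n : ℚ) + 1) := by
  constructor
  · apply Finset.prod_congr rfl
    intro k hk
    rw [Finset.mem_Icc] at hk
    exact hashInnerSum n k hk.1 hk.2 z
  · -- reindex k ↦ n + 2 - k
    have hre : (∏ k ∈ Finset.Icc 1 n, (z + ((n : ℚ) + 1) / ((n : ℚ) + 2 - (k : ℚ)))) =
        ∏ m ∈ Finset.Icc 2 (n + 1), (z + ((n : ℚ) + 1) / (m : ℚ)) := by
      apply Finset.prod_nbij' (fun k => n + 2 - k) (fun m => n + 2 - m)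
      · intro a ha; rw [Finset.mem_Icc] at ha ⊢; omega
      · intro a ha; rw [Finset.mem_Icc] at ha ⊢; omega
      · intro a ha; rw [Finset.mem_Icc] at ha; omega
      · intro a ha; rw [Finset.mem_Icc] at ha; omega
      · intro a ha
        rw [Finset.mem_Icc] at ha
        have : ((n + 2 - a : ℕ) : ℚ) = (n : ℚ) + 2 - (a : ℚ) := by
          push_cast [Nat.cast_sub (by omega : a ≤ n + 2)]; ring
        rw [this]
    rw [hre]
    have hfac : (∏ m ∈ Finset.Icc 2 (n + 1), (m : ℚ)) = (Nat.factorial (n + 1) : ℚ) := by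
      have h0 : (∏ m ∈ Finset.Icc 2 (n + 1), (m : ℚ)) =
          ((∏ m ∈ Finset.Icc 2 (n + 1), m : ℕ) : ℚ) := by push_cast; rfl
      rw [h0]
      congr 1
      have h1 : Finset.Icc 2 (n + 1) = Finset.Ico 2 (n + 2) := by exact (Finset.Ico_add_one_right_eq_Icc 2 (n + 1)).symm
      rw [h1]
      have h2 := Finset.prod_eq_prod_Ico_succ_bot (by omega : 1 < n + 2) (fun x => x)
      have h3 := Finset.prod_Ico_id_eq_factorial (n + 1)
      simp only [one_mul] at h2
      rw [← h2] at *
      exact h3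
    have hstep : ∀ m ∈ Finset.Icc 2 (n + 1),
        (z + ((n : ℚ) + 1) / (m : ℚ)) = ((m : ℚ) * z + (n : ℚ) + 1) / (m : ℚ) := by
      intro m hm
      rw [Finset.mem_Icc] at hm
      have : (m : ℚ) ≠ 0 := by
        have : (2 : ℚ) ≤ m := by exact_mod_cast hm.1
        linarith
      field_simp
      ring
    rw [Finset.prod_congr rfl hstep, Finset.prod_div_distrib, hfac]
    rw [div_eq_mul_inv, mul_comm, one_div]
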